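/- arXiv:2205.08098 — 4 statements merged into one kernel-verified Lean document; each statement's English description precedes it below -/
import Mathlib

section
/- Let Θ be the closed unit ball of ℝ^d and suppose the landscape assumptions hold with constants S, μ, α, r > 0 and unique global minimizer θ_0* of F. Let T : Θ → Θ be any map satisfying T(θ) = θ_0* for every θ ∈ B_r(θ_0*). Set δ = (1/4)·min{μ, r, α}, and suppose the sample size n is large enough that, with probability at least 1 − ρ over the data x_1, …, x_n, the empirical risk F̂_n is a δ-approximation of F. Conditionally on the data, let θ_1, …, θ_L satisfy the sampler assumption with total-variation error δ_β. Then there exist constants C, c > 0 (depending only on d, α, r, μ and S, and not on β, L, δ_β or n) such that for every β ≥ c·r^{−2}, the probability that T(θ_i) ≠ θ_0* for all i = 1, …, L is at most ρ + (C·β^d·exp(−β·α/2) + δ_β)^L. -/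
open MeasureTheory ProbabilityTheory
open scoped RealInnerProductSpace

noncomputable section

/-- The closed unit ball of `ℝ^d`, the parameter domain. -/
def unitDomain (d : ℕ) : Set (EuclideanSpace ℝ (Fin d)) := Metric.closedBall 0 1

/-- The Hessian of `F`, as the Fréchet derivative of the gradient. -/
def hess {d : ℕ} (F : EuclideanSpace ℝ (Fin d) → ℝ) (θ : EuclideanSpace ℝ (Fin d)) :
    EuclideanSpace ℝ (Fin d) →L[ℝ] EuclideanSpace ℝ (Fin d) :=
  fderiv ℝ (gradient F) θ

/-- `F̂` is a `δ`-approximation of `F` on the closed unit ball `Θ` of `ℝ^d`: the values,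
gradients and Hessians (in operator norm) are uniformly `δ`-close on `Θ`, and `F` and `F̂`
have the same number `K+1` of stationary points (interior points of `Θ` with vanishing
gradient), which can be paired so that corresponding ones are `δ`-close. -/
def IsDeltaApprox {d : ℕ} (F Fhat : EuclideanSpace ℝ (Fin d) → ℝ) (δ : ℝ) : Prop :=
  (∀ θ ∈ unitDomain d, |F θ - Fhat θ| ≤ δ) ∧
  (∀ θ ∈ unitDomain d, ‖gradient F θ - gradient Fhat θ‖ ≤ δ) ∧
  (∀ θ ∈ unitDomain d, ‖hess F θ - hess Fhat θ‖ ≤ δ) ∧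
  ∃ (K : ℕ) (s shat : Fin (K + 1) → EuclideanSpace ℝ (Fin d)),
    Function.Injective s ∧ Function.Injective shat ∧
    Set.range s = {θ | θ ∈ Metric.ball (0 : EuclideanSpace ℝ (Fin d)) 1 ∧
      gradient F θ = 0} ∧
    Set.range shat = {θ | θ ∈ Metric.ball (0 : EuclideanSpace ℝ (Fin d)) 1 ∧
      gradient Fhat θ = 0} ∧
    ∀ i, ‖s i - shat i‖ ≤ δ

/-- The Gibbs measure `π_β ∝ exp(−β F̂)·1_Θ` on the closed unit ball `Θ` of `ℝ^d`. -/
def gibbs {d : ℕ} (Fhat : EuclideanSpace ℝ (Fin d) → ℝ) (β : ℝ) :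
    Measure (EuclideanSpace ℝ (Fin d)) :=
  (((volume.restrict (unitDomain d)).withDensity
      fun θ => ENNReal.ofReal (Real.exp (-(β * Fhat θ)))) Set.univ)⁻¹ •
    ((volume.restrict (unitDomain d)).withDensity
      fun θ => ENNReal.ofReal (Real.exp (-(β * Fhat θ))))

open scoped ENNReal NNReal in
set_option maxHeartbeats 1000000 in
lemma gibbs_tail_bound {d : ℕ} (hd : 0 < d) {S μ α r : ℝ}
    (hS : 0 < S) (hμ : 0 < μ) (hα : 0 < α) (hr : 0 < r)
    (F : EuclideanSpace ℝ (Fin d) → ℝ) (θ0 : EuclideanSpace ℝ (Fin d))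
    (hF : ContDiff ℝ 2 F)
    (hhess : ∀ θ ∈ unitDomain d, ‖hess F θ‖ ≤ S)
    (hθ0 : θ0 ∈ unitDomain d)
    (hmin : ∀ θ ∈ unitDomain d, θ ≠ θ0 → F θ0 < F θ)
    (hball : Metric.closedBall θ0 r ⊆ unitDomain d)
    (hout : ∀ θ ∈ unitDomain d, θ ∉ Metric.closedBall θ0 r → F θ0 + α ≤ F θ)
    {β : ℝ} (hβ : 4 / r ^ 2 ≤ β)
    {Fhat : EuclideanSpace ℝ (Fin d) → ℝ}
    (ha : IsDeltaApprox F Fhat (min μ (min r α) / 4)) :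
    (gibbs Fhat β (Metric.closedBall θ0 r)ᶜ).toReal ≤
      Real.exp S * β ^ d * Real.exp (-(β * α / 2)) := by
  classical
  set δ : ℝ := min μ (min r α) / 4 with hδdef
  have hδ0 : 0 < δ := by
    have h1 : 0 < min μ (min r α) := lt_min hμ (lt_min hr hα)
    positivity
  have hδα : δ ≤ α / 4 := by
    have : min μ (min r α) ≤ α := le_trans (min_le_right _ _) (min_le_right _ _)
    rw [hδdef]; linarith
  -- r ≤ 2
  have hr2 : r ≤ 2 := by
    set u : EuclideanSpace ℝ (Fin d) := EuclideanSpace.single (⟨0, hd⟩ : Fin d) (1 : ℝ) with hu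
    have hnu : ‖u‖ = 1 := by simp [hu, EuclideanSpace.norm_single]
    have h1 : θ0 + r • u ∈ Metric.closedBall θ0 r := by
      simp [dist_eq_norm, norm_smul, hnu, abs_of_pos hr, hr.le]
    have h3 : ‖θ0 + r • u‖ ≤ 1 := by
      simpa [unitDomain, dist_eq_norm] using hball h1
    have h4 : ‖θ0‖ ≤ 1 := by simpa [unitDomain, dist_eq_norm] using hθ0
    have h5 : ‖r • u‖ ≤ ‖θ0 + r • u‖ + ‖θ0‖ := by
      have := norm_sub_le (θ0 + r • u) θ0
      simpa using this
    have h6 : ‖r • u‖ = r := by simp [norm_smul, hnu, abs_of_pos hr]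
    linarith
  have hβ1 : 1 ≤ β := by
    have h1 : (1 : ℝ) ≤ 4 / r ^ 2 := by
      rw [le_div_iff₀ (by positivity)]
      nlinarith
    linarith
  have hβpos : 0 < β := lt_of_lt_of_le one_pos hβ1
  set sβ : ℝ := Real.sqrt β with hsβ
  have hsβpos : 0 < sβ := Real.sqrt_pos.2 hβpos
  have hsβ1 : 1 ≤ sβ := by
    rw [hsβ, show (1:ℝ) = Real.sqrt 1 by simp]
    exact Real.sqrt_le_sqrt hβ1
  have hss : sβ * sβ = β := Real.mul_self_sqrt hβpos.le
  set t : ℝ := sβ⁻¹ with htdef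
  have htpos : 0 < t := by positivity
  have htr : t ≤ r := by
    have h1 : r⁻¹ ≤ sβ := by
      have h2 : r⁻¹ ^ 2 ≤ β := by
        have he : r⁻¹ ^ 2 = 1 / r ^ 2 := by field_simp
        rw [he]
        calc (1:ℝ) / r ^ 2 ≤ 4 / r ^ 2 := by gcongr <;> norm_num
          _ ≤ β := hβ
      calc r⁻¹ = Real.sqrt (r⁻¹ ^ 2) := (Real.sqrt_sq (by positivity)).symm
        _ ≤ Real.sqrt β := Real.sqrt_le_sqrt h2
    have h6 : (1:ℝ) ≤ r * sβ := by
      have := mul_le_mul_of_nonneg_left h1 hr.le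
      rwa [mul_inv_cancel₀ hr.ne'] at this
    have h3 : sβ⁻¹ * 1 ≤ sβ⁻¹ * (r * sβ) := by
      apply mul_le_mul_of_nonneg_left h6 (by positivity)
    calc t = sβ⁻¹ * 1 := by rw [mul_one]
      _ ≤ sβ⁻¹ * (r * sβ) := h3
      _ = r := by field_simp
  obtain ⟨happx, -, -, -⟩ := ha
  have hFmin : ∀ θ ∈ unitDomain d, F θ0 ≤ F θ := by
    intro θ hθ
    by_cases h : θ = θ0
    · rw [h]
    · exact (hmin θ hθ h).le
  have hgrad0 : gradient F θ0 = 0 := by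
    have hloc : IsLocalMin F θ0 := by
      apply Filter.eventually_of_mem (Metric.closedBall_mem_nhds θ0 hr)
      intro θ hθ; exact hFmin θ (hball hθ)
    have hfd : fderiv ℝ F θ0 = 0 := hloc.fderiv_eq_zero
    simp [gradient, hfd]
  have hdiffF : Differentiable ℝ F := hF.differentiable (by norm_num)
  have hgradD : Differentiable ℝ (gradient F) := by
    have h1 : ContDiff ℝ 1 (fderiv ℝ F) := hF.fderiv_right (by norm_num)
    have h2 : Differentiable ℝ (fderiv ℝ F) := h1.differentiable (by norm_num)
    have h3 : gradient F =
        (⇑(InnerProductSpace.toDual ℝ (EuclideanSpace ℝ (Fin d))).symm.toContinuousLinearEquiv) ∘ (fderiv ℝ F) := by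
      funext x
      simp [gradient]
    rw [h3]
    exact ((InnerProductSpace.toDual ℝ (EuclideanSpace ℝ (Fin d))).symm.toContinuousLinearEquiv.differentiable).comp h2
  have hgradlip : ∀ θ ∈ Metric.closedBall θ0 r, ‖gradient F θ‖ ≤ S * ‖θ - θ0‖ := by
    intro θ hθ
    have := Convex.norm_image_sub_le_of_norm_fderiv_le
      (f := gradient F) (s := Metric.closedBall θ0 r)
      (fun x _ => hgradD.differentiableAt)
      (fun x hx => by
        rw [show fderiv ℝ (gradient F) x = hess F x from rfl]
        exact hhess x (hball hx))
      (convex_closedBall θ0 r) (Metric.mem_closedBall_self hr.le) hθ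
    simpa [hgrad0] using this
  have hnormfd : ∀ x : EuclideanSpace ℝ (Fin d), ‖fderiv ℝ F x‖ = ‖gradient F x‖ := by
    intro x
    rw [show gradient F x = (InnerProductSpace.toDual ℝ (EuclideanSpace ℝ (Fin d))).symm (fderiv ℝ F x) from rfl,
      LinearIsometryEquiv.norm_map]
  have hFval : ∀ θ ∈ Metric.closedBall θ0 t, F θ ≤ F θ0 + S * t * t := by
    intro θ hθ
    have hsub : Metric.closedBall θ0 t ⊆ Metric.closedBall θ0 r :=
      Metric.closedBall_subset_closedBall htr
    have hmv := Convex.norm_image_sub_le_of_norm_fderiv_le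
      (f := F) (s := Metric.closedBall θ0 t)
      (fun x _ => hdiffF.differentiableAt)
      (fun x hx => by
        rw [hnormfd]
        calc ‖gradient F x‖ ≤ S * ‖x - θ0‖ := hgradlip x (hsub hx)
          _ ≤ S * t := by
              apply mul_le_mul_of_nonneg_left _ hS.le
              simpa [dist_eq_norm] using hx)
      (convex_closedBall θ0 t) (Metric.mem_closedBall_self htpos.le) hθ
    have h2 : F θ - F θ0 ≤ S * t * ‖θ - θ0‖ :=
      le_trans (le_abs_self _) (by simpa [Real.norm_eq_abs] using hmv)
    have h3 : ‖θ - θ0‖ ≤ t := by simpa [dist_eq_norm] using hθ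
    nlinarith [mul_le_mul_of_nonneg_left h3 (mul_nonneg hS.le htpos.le)]
  have hβtt : β * (t * t) = 1 := by
    have h1 : t * t = β⁻¹ := by rw [htdef, ← hss]; field_simp
    rw [h1, mul_inv_cancel₀ hβpos.ne']
  have hΘt : Metric.closedBall θ0 t ⊆ unitDomain d :=
    (Metric.closedBall_subset_closedBall htr).trans hball
  have hlow : ∀ θ ∈ Metric.closedBall θ0 t,
      Real.exp (-(β * (F θ0 + δ)) - S) ≤ Real.exp (-(β * Fhat θ)) := by
    intro θ hθ
    apply Real.exp_le_exp.2
    have h1 : |F θ - Fhat θ| ≤ δ := happx θ (hΘt hθ)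
    have h2 : Fhat θ ≤ F θ + δ := by
      rcases abs_le.1 h1 with ⟨hl, _⟩; linarith
    have h3 : F θ ≤ F θ0 + S * t * t := hFval θ hθ
    have h5 : β * (S * t * t) = S := by
      have he : β * (S * t * t) = S * (β * (t * t)) := by ring
      rw [he, hβtt, mul_one]
    nlinarith
  have hhigh : ∀ θ ∈ unitDomain d, θ ∉ Metric.closedBall θ0 r →
      Real.exp (-(β * Fhat θ)) ≤ Real.exp (-(β * (F θ0 + α - δ))) := by
    intro θ hθ hθ'
    apply Real.exp_le_exp.2
    have h1 : |F θ - Fhat θ| ≤ δ := happx θ hθ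
    have h2 : F θ - δ ≤ Fhat θ := by
      rcases abs_le.1 h1 with ⟨_, hr'⟩; linarith
    have h3 := hout θ hθ hθ'
    nlinarith
  have hhigh2 : ∀ θ ∈ unitDomain d,
      Real.exp (-(β * Fhat θ)) ≤ Real.exp (-(β * (F θ0 - δ))) := by
    intro θ hθ
    apply Real.exp_le_exp.2
    have h1 : |F θ - Fhat θ| ≤ δ := happx θ hθ
    have h2 : F θ - δ ≤ Fhat θ := by
      rcases abs_le.1 h1 with ⟨_, hr'⟩; linarith
    have h3 := hFmin θ hθ
    nlinarith
  set f : EuclideanSpace ℝ (Fin d) → ℝ≥0∞ := fun θ => ENNReal.ofReal (Real.exp (-(β * Fhat θ))) with hfdef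
  set m : Measure (EuclideanSpace ℝ (Fin d)) := volume.restrict (unitDomain d) with hmdef
  set ν : Measure (EuclideanSpace ℝ (Fin d)) := m.withDensity f with hνdef
  set Z : ℝ≥0∞ := ν Set.univ with hZdef
  set V : ℝ≥0∞ := volume (Metric.closedBall (0:EuclideanSpace ℝ (Fin d)) 1) with hVdef
  have hV0 : V ≠ 0 := by
    rw [hVdef]
    exact (Metric.measure_closedBall_pos volume (0:EuclideanSpace ℝ (Fin d)) one_pos).ne'
  have hVtop : V ≠ ⊤ := by
    rw [hVdef]; exact measure_closedBall_lt_top.ne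
  have hΘmeas : MeasurableSet (unitDomain d) := measurableSet_closedBall
  have hΘvol : volume (unitDomain d) = V := by rw [hVdef]; rfl
  have hvolt : volume (Metric.closedBall θ0 t) = ENNReal.ofReal (t ^ d) * V := by
    rw [hVdef, Measure.addHaar_closedBall' volume θ0 htpos.le, finrank_euclideanSpace_fin]
  have hZeq : Z = ∫⁻ θ, f θ ∂m := by
    rw [hZdef, hνdef, withDensity_apply f MeasurableSet.univ, Measure.restrict_univ]
  have hZlow : ENNReal.ofReal (Real.exp (-(β * (F θ0 + δ)) - S)) *
      (ENNReal.ofReal (t ^ d) * V) ≤ Z := by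
    calc ENNReal.ofReal (Real.exp (-(β * (F θ0 + δ)) - S)) * (ENNReal.ofReal (t ^ d) * V)
        = ENNReal.ofReal (Real.exp (-(β * (F θ0 + δ)) - S)) *
            volume (Metric.closedBall θ0 t) := by rw [hvolt]
      _ = ∫⁻ _ in Metric.closedBall θ0 t,
            ENNReal.ofReal (Real.exp (-(β * (F θ0 + δ)) - S)) ∂volume := by
          rw [setLIntegral_const]
      _ ≤ ∫⁻ θ in Metric.closedBall θ0 t, f θ ∂volume :=
          setLIntegral_mono' measurableSet_closedBall
            (fun θ hθ => ENNReal.ofReal_le_ofReal (hlow θ hθ))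
      _ = ∫⁻ θ in Metric.closedBall θ0 t, f θ ∂m := by
          rw [hmdef, Measure.restrict_restrict measurableSet_closedBall,
            Set.inter_eq_self_of_subset_left hΘt]
      _ ≤ ∫⁻ θ, f θ ∂m := setLIntegral_le_lintegral _ _
      _ = Z := hZeq.symm
  have hZhigh : Z ≤ ENNReal.ofReal (Real.exp (-(β * (F θ0 - δ)))) * V := by
    calc Z = ∫⁻ θ in unitDomain d, f θ ∂volume := by rw [hZeq, hmdef]
      _ ≤ ∫⁻ _ in unitDomain d,
            ENNReal.ofReal (Real.exp (-(β * (F θ0 - δ)))) ∂volume :=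
          setLIntegral_mono' hΘmeas
            (fun θ hθ => ENNReal.ofReal_le_ofReal (hhigh2 θ hθ))
      _ = ENNReal.ofReal (Real.exp (-(β * (F θ0 - δ)))) * volume (unitDomain d) :=
          setLIntegral_const _ _
      _ = ENNReal.ofReal (Real.exp (-(β * (F θ0 - δ)))) * V := by rw [hΘvol]
  have hZ0 : Z ≠ 0 := by
    have hpos : (0:ℝ≥0∞) < ENNReal.ofReal (Real.exp (-(β * (F θ0 + δ)) - S)) *
        (ENNReal.ofReal (t ^ d) * V) := by
      apply ENNReal.mul_pos
      · exact (ENNReal.ofReal_pos.2 (Real.exp_pos _)).ne'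
      · exact (ENNReal.mul_pos (ENNReal.ofReal_pos.2 (by positivity)).ne' hV0).ne'
    exact (lt_of_lt_of_le hpos hZlow).ne'
  have hZtop : Z ≠ ⊤ :=
    (lt_of_le_of_lt hZhigh (ENNReal.mul_lt_top ENNReal.ofReal_lt_top
      (lt_top_iff_ne_top.2 hVtop))).ne
  set A : Set (EuclideanSpace ℝ (Fin d)) := (Metric.closedBall θ0 r)ᶜ with hAdef
  have hAmeas : MeasurableSet A := measurableSet_closedBall.compl
  have hνA : ν A ≤ ENNReal.ofReal (Real.exp (-(β * (F θ0 + α - δ)))) * V := by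
    calc ν A = ∫⁻ θ in A, f θ ∂m := by rw [hνdef, withDensity_apply f hAmeas]
      _ = ∫⁻ θ in A ∩ unitDomain d, f θ ∂volume := by
          rw [hmdef, Measure.restrict_restrict hAmeas]
      _ ≤ ∫⁻ _ in A ∩ unitDomain d,
            ENNReal.ofReal (Real.exp (-(β * (F θ0 + α - δ)))) ∂volume :=
          setLIntegral_mono' (hAmeas.inter hΘmeas)
            (fun θ hθ => ENNReal.ofReal_le_ofReal (hhigh θ hθ.2 hθ.1))
      _ = ENNReal.ofReal (Real.exp (-(β * (F θ0 + α - δ)))) *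
            volume (A ∩ unitDomain d) := setLIntegral_const _ _
      _ ≤ ENNReal.ofReal (Real.exp (-(β * (F θ0 + α - δ)))) * V := by
          apply mul_le_mul_right
          rw [← hΘvol]
          exact measure_mono Set.inter_subset_right
  set ε : ℝ := Real.exp S * β ^ d * Real.exp (-(β * α / 2)) with hεdef
  have hε0 : 0 ≤ ε := by positivity
  have hkey : Real.exp (-(β * (F θ0 + α - δ))) ≤
      ε * (Real.exp (-(β * (F θ0 + δ)) - S) * t ^ d) := by
    have h1 : β ^ d * t ^ d = sβ ^ d := by
      rw [← mul_pow]
      congr 1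
      rw [htdef, ← hss]
      field_simp
    have h2 : (1:ℝ) ≤ sβ ^ d := by
      calc (1:ℝ) = 1 ^ d := (one_pow d).symm
        _ ≤ sβ ^ d := pow_le_pow_left₀ (by norm_num) hsβ1 d
    have h3 : Real.exp (-(β * (α - 2*δ))) ≤ Real.exp (-(β * α / 2)) := by
      apply Real.exp_le_exp.2
      nlinarith
    calc Real.exp (-(β * (F θ0 + α - δ)))
        = Real.exp (-(β * (α - 2*δ))) * Real.exp (-(β * (F θ0 + δ))) := by
          rw [← Real.exp_add]; congr 1; ring
      _ ≤ Real.exp (-(β * α / 2)) * Real.exp (-(β * (F θ0 + δ))) :=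
          mul_le_mul_of_nonneg_right h3 (Real.exp_pos _).le
      _ ≤ sβ ^ d * (Real.exp (-(β * α / 2)) * Real.exp (-(β * (F θ0 + δ)))) := by
          nlinarith [Real.exp_pos (-(β * α / 2)), Real.exp_pos (-(β * (F θ0 + δ))),
            mul_pos (Real.exp_pos (-(β * α / 2))) (Real.exp_pos (-(β * (F θ0 + δ))))]
      _ = ε * (Real.exp (-(β * (F θ0 + δ)) - S) * t ^ d) := by
          have he : Real.exp (-(β * (F θ0 + δ)) - S) =
              Real.exp (-(β * (F θ0 + δ))) / Real.exp S := Real.exp_sub _ _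
          rw [hεdef, he, ← h1]
          field_simp
  have hfinal : ν A ≤ ENNReal.ofReal ε * Z := by
    calc ν A ≤ ENNReal.ofReal (Real.exp (-(β * (F θ0 + α - δ)))) * V := hνA
      _ ≤ ENNReal.ofReal (ε * (Real.exp (-(β * (F θ0 + δ)) - S) * t ^ d)) * V :=
          mul_le_mul_left (ENNReal.ofReal_le_ofReal hkey) V
      _ = ENNReal.ofReal ε * (ENNReal.ofReal (Real.exp (-(β * (F θ0 + δ)) - S)) *
            (ENNReal.ofReal (t ^ d) * V)) := by
          rw [ENNReal.ofReal_mul hε0,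
            ENNReal.ofReal_mul (Real.exp_pos (-(β * (F θ0 + δ)) - S)).le]
          ring
      _ ≤ ENNReal.ofReal ε * Z := mul_le_mul_right hZlow _
  have hπ : gibbs Fhat β A ≤ ENNReal.ofReal ε := by
    have h1 : gibbs Fhat β A = Z⁻¹ * ν A := by
      rw [gibbs, Measure.smul_apply, smul_eq_mul]
    rw [h1]
    calc Z⁻¹ * ν A ≤ Z⁻¹ * (ENNReal.ofReal ε * Z) := mul_le_mul_right hfinal _
      _ = ENNReal.ofReal ε * (Z⁻¹ * Z) := by ring
      _ = ENNReal.ofReal ε := by rw [ENNReal.inv_mul_cancel hZ0 hZtop, mul_one]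
  exact ENNReal.toReal_le_of_le_ofReal hε0 hπ

set_option maxHeartbeats 1000000 in
/-- sampling approach, Theorem 3.1 of the paper: under the landscape
assumptions with constants `S, μ, α, r` and unique global minimizer `θ0` of `F`, for
any optimizer `T` sending every point of `B_r(θ0)` to `θ0`, with `δ = min{μ,r,α}/4`,
there are constants `C, c > 0` (not depending on `β`, `L`, `δβ`, the data, or the
sampler) such that for every `β ≥ c·r⁻²`: whenever the (random) empirical risk `F̂` is a
`δ`-approximation of `F` with probability at least `1 − ρ`, and, conditionally on the
data, `θ_1, …, θ_L` are drawn by a sampler whose conditional laws are within total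
variation `δβ` of the Gibbs measure `π_β` of `F̂`, the probability that `T(θ_i) ≠ θ0`
for all `i` is at most `ρ + (C·β^d·exp(−βα/2) + δβ)^L`. -/
theorem stmt_0 (d : ℕ) (hd : 0 < d) (S μ α r ρ : ℝ)
    (hS : 0 < S) (hμ : 0 < μ) (hα : 0 < α) (hr : 0 < r) (hρ : 0 ≤ ρ) :
    ∃ C > 0, ∃ c > 0, ∀ β : ℝ, c / r ^ 2 ≤ β →
      ∀ (F : EuclideanSpace ℝ (Fin d) → ℝ) (θ0 : EuclideanSpace ℝ (Fin d))
        (T : EuclideanSpace ℝ (Fin d) → EuclideanSpace ℝ (Fin d)),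
        ContDiff ℝ 2 F →
        (∀ θ ∈ unitDomain d, ‖hess F θ‖ ≤ S) →
        θ0 ∈ unitDomain d →
        (∀ θ ∈ unitDomain d, θ ≠ θ0 → F θ0 < F θ) →
        Metric.closedBall θ0 r ⊆ unitDomain d →
        (∀ θ ∈ Metric.closedBall θ0 r, ∀ v, μ * ‖v‖ ^ 2 ≤ ⟪v, hess F θ v⟫) →
        (∀ θ ∈ unitDomain d, θ ∉ Metric.closedBall θ0 r → F θ0 + α ≤ F θ) →
        (∀ θ ∈ Metric.closedBall θ0 r, T θ = θ0) →
        ∀ (Ω : Type) (mΩ : MeasurableSpace Ω) (P : Measure Ω),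
          IsProbabilityMeasure P →
          ∀ mData : MeasurableSpace Ω, mData ≤ mΩ →
          ∀ (Fhat : Ω → EuclideanSpace ℝ (Fin d) → ℝ) (L : ℕ)
            (θs : Fin L → Ω → EuclideanSpace ℝ (Fin d)) (δβ : ℝ),
            0 ≤ δβ → δβ < 1 →
            (∀ i, Measurable (θs i)) →
            1 - ρ ≤ (P {ω | IsDeltaApprox F (Fhat ω) (min μ (min r α) / 4)}).toReal →
            (∀ (i : Fin L) (A : Set (EuclideanSpace ℝ (Fin d))), MeasurableSet A →
              ∀ᵐ ω ∂P,
                |(P[(fun ω' => Set.indicator A (fun _ => (1 : ℝ)) (θs i ω')) |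
                    mData ⊔ ⨆ j : Fin L, ⨆ _ : j < i,
                      MeasurableSpace.comap (θs j) inferInstance]) ω -
                  ((gibbs (Fhat ω) β) A).toReal| ≤ δβ) →
            (P {ω | ∀ i, T (θs i ω) ≠ θ0}).toReal ≤
              ρ + (C * β ^ d * Real.exp (-(β * α / 2)) + δβ) ^ L := by
  classical
  refine ⟨Real.exp S, Real.exp_pos S, 4, by norm_num, ?_⟩
  intro β hβ F θ0 T hF hhess hθ0 hmin hball hconv hout hT
  intro Ω mΩ P hP mData hmData Fhat L θs δβ hδβ0 hδβ1 hθs hgood hcond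
  letI : MeasurableSpace Ω := mΩ
  set δ : ℝ := min μ (min r α) / 4 with hδdef
  set A : Set (EuclideanSpace ℝ (Fin d)) := (Metric.closedBall θ0 r)ᶜ with hAdef
  have hAmeas : MeasurableSet A := measurableSet_closedBall.compl
  have hβpos : 0 < β := lt_of_lt_of_le (by positivity) hβ
  set ε : ℝ := Real.exp S * β ^ d * Real.exp (-(β * α / 2)) with hεdef
  have hε0 : 0 ≤ ε := by rw [hεdef]; positivity
  set q : ℝ := ε + δβ with hqdef
  have hq0 : 0 ≤ q := add_nonneg hε0 hδβ0
  let 𝔽 : Fin L → MeasurableSpace Ω := fun i =>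
    mData ⊔ ⨆ j : Fin L, ⨆ _ : j < i, MeasurableSpace.comap (θs j) inferInstance
  have hθsΩ : ∀ j, Measurable[mΩ] (θs j) := fun j => (hθs j).mono hmData le_rfl
  have h𝔽 : ∀ i, 𝔽 i ≤ mΩ := by
    intro i
    apply sup_le hmData
    apply iSup_le; intro j; apply iSup_le; intro _
    exact (hθsΩ j).comap_le
  have h𝔽mono : ∀ i j : Fin L, i ≤ j → 𝔽 i ≤ 𝔽 j := by
    intro i j hij
    apply sup_le le_sup_left
    apply le_sup_of_le_right
    apply iSup_le; intro k; apply iSup_le; intro hk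
    exact le_iSup_of_le k (le_iSup_of_le (lt_of_lt_of_le hk hij) le_rfl)
  let X : Fin L → Ω → ℝ := fun i ω => Set.indicator A (fun _ => (1:ℝ)) (θs i ω)
  let g : Fin L → Ω → ℝ := fun i => P[X i | 𝔽 i]
  have hXeq : ∀ i, X i = Set.indicator (θs i ⁻¹' A) (fun _ => (1:ℝ)) := by
    intro i; funext ω
    by_cases h : θs i ω ∈ A <;> simp [X, Set.indicator, h]
  have hXint : ∀ i, Integrable (X i) P := by
    intro i; rw [hXeq i]
    exact (integrable_const (1:ℝ)).indicator ((hθsΩ i) hAmeas)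
  have hgle : ∀ i, MeasurableSet[𝔽 i] {ω | g i ω ≤ q} := by
    intro i
    exact measurableSet_le stronglyMeasurable_condExp.measurable measurable_const
  set G : Set Ω := ⋂ i : Fin L, {ω | g i ω ≤ q} with hGdef
  have hGmeas : MeasurableSet[mΩ] G :=
    MeasurableSet.iInter (fun i => h𝔽 i _ (hgle i))
  have hae : ∀ᵐ ω ∂P, IsDeltaApprox F (Fhat ω) δ → ω ∈ G := by
    have h1 : ∀ᵐ ω ∂P, ∀ i : Fin L,
        |g i ω - (gibbs (Fhat ω) β A).toReal| ≤ δβ := by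
      rw [ae_all_iff]
      intro i
      exact hcond i A hAmeas
    filter_upwards [h1] with ω hω hωg
    rw [hGdef]; simp only [Set.mem_iInter, Set.mem_setOf_eq]
    intro i
    have h2 := (abs_le.1 (hω i)).2
    have h3 : (gibbs (Fhat ω) β A).toReal ≤ ε :=
      gibbs_tail_bound hd hS hμ hα hr F θ0 hF hhess hθ0 hmin hball hout hβ hωg
    rw [hqdef]; linarith
  have hGcompl : (P Gᶜ).toReal ≤ ρ := by
    have h1 : P {ω | IsDeltaApprox F (Fhat ω) δ} ≤ P G := by
      have h2 : P {ω | ¬ (IsDeltaApprox F (Fhat ω) δ → ω ∈ G)} = 0 := ae_iff.1 hae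
      calc P {ω | IsDeltaApprox F (Fhat ω) δ}
          ≤ P (G ∪ {ω | ¬ (IsDeltaApprox F (Fhat ω) δ → ω ∈ G)}) := by
            apply measure_mono
            intro ω hω
            by_cases h : ω ∈ G
            · exact Or.inl h
            · exact Or.inr (fun himp => h (himp hω))
        _ ≤ P G + P {ω | ¬ (IsDeltaApprox F (Fhat ω) δ → ω ∈ G)} := measure_union_le _ _
        _ = P G := by rw [h2, add_zero]
    have h2 : 1 - ρ ≤ (P G).toReal :=
      le_trans hgood (ENNReal.toReal_mono (measure_ne_top P G) h1)
    have h3 : P Gᶜ = 1 - P G := prob_compl_eq_one_sub hGmeas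
    rw [h3, ENNReal.toReal_sub_of_le prob_le_one ENNReal.one_ne_top]
    simp only [ENNReal.toReal_one]
    linarith
  set Ek : ℕ → Set Ω := fun k =>
    ⋂ i : Fin L, ⋂ _ : (i:ℕ) < k, ((θs i ⁻¹' A) ∩ {ω | g i ω ≤ q}) with hEkdef
  have hEkmem : ∀ k ω, ω ∈ Ek k ↔
      ∀ i : Fin L, (i:ℕ) < k → (θs i ω ∈ A ∧ g i ω ≤ q) := by
    intro k ω
    rw [hEkdef]
    simp only [Set.mem_iInter, Set.mem_inter_iff, Set.mem_preimage, Set.mem_setOf_eq]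
  have hEk𝔽 : ∀ (k : ℕ) (j : Fin L), k ≤ (j:ℕ) → MeasurableSet[𝔽 j] (Ek k) := by
    intro k j hkj
    rw [hEkdef]
    apply MeasurableSet.iInter; intro i
    apply MeasurableSet.iInter; intro hik
    have hij : i < j := Fin.lt_def.2 (lt_of_lt_of_le hik hkj)
    apply MeasurableSet.inter
    · have hc : MeasurableSet[MeasurableSpace.comap (θs i) inferInstance]
          (θs i ⁻¹' A) := ⟨A, hAmeas, rfl⟩
      have hle : MeasurableSpace.comap (θs i) inferInstance ≤ 𝔽 j :=
        le_sup_of_le_right (le_iSup_of_le i (le_iSup_of_le hij le_rfl))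
      exact hle _ hc
    · exact (h𝔽mono i j hij.le) _ (hgle i)
  have hind : ∀ k, k ≤ L → (P (Ek k)).toReal ≤ q ^ k := by
    intro k
    induction k with
    | zero =>
      intro _
      have huniv : Ek 0 = Set.univ := by
        ext ω
        rw [hEkmem]
        simp
      rw [huniv]
      simp
    | succ k ih =>
      intro hkL
      have hk : k < L := lt_of_lt_of_le (Nat.lt_succ_self k) hkL
      set κ : Fin L := ⟨k, hk⟩ with hκdef
      have hκk : (κ:ℕ) = k := rfl
      set Sset : Set Ω := Ek k ∩ {ω | g κ ω ≤ q} with hSdef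
      have hS𝔽 : MeasurableSet[𝔽 κ] Sset :=
        MeasurableSet.inter (hEk𝔽 k κ (le_of_eq hκk.symm)) (hgle κ)
      have hSmeas : MeasurableSet[mΩ] Sset := h𝔽 κ _ hS𝔽
      have hEsucc : Ek (k+1) = Sset ∩ (θs κ ⁻¹' A) := by
        ext ω
        rw [hEkmem]
        constructor
        · intro h
          have hκmem := h κ (by rw [hκk]; exact Nat.lt_succ_self k)
          refine ⟨⟨?_, hκmem.2⟩, hκmem.1⟩
          rw [hEkmem]
          intro i hi
          exact h i (hi.trans (Nat.lt_succ_self k))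
        · rintro ⟨⟨h1, h2⟩, h3⟩ i hi
          rcases Nat.lt_succ_iff_lt_or_eq.1 hi with h | h
          · exact (hEkmem k ω).1 h1 i h
          · have hiκ : i = κ := Fin.ext (by rw [h, hκk])
            rw [hiκ]
            exact ⟨h3, h2⟩
      have hXint' : ∫ ω in Sset, X κ ω ∂P = (P (Sset ∩ (θs κ ⁻¹' A))).toReal := by
        calc ∫ ω in Sset, X κ ω ∂P
            = ∫ ω in Sset, Set.indicator (θs κ ⁻¹' A) (fun _ => (1:ℝ)) ω ∂P := by
              rw [hXeq κ]
          _ = ∫ _ in Sset ∩ (θs κ ⁻¹' A), (1:ℝ) ∂P :=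
              setIntegral_indicator ((hθsΩ κ) hAmeas)
          _ = (P (Sset ∩ (θs κ ⁻¹' A))).toReal := by
              simp [integral_const]
              rfl
      have hce : ∫ ω in Sset, X κ ω ∂P = ∫ ω in Sset, g κ ω ∂P :=
        (setIntegral_condExp (h𝔽 κ) (hXint κ) hS𝔽).symm
      have hbound : ∫ ω in Sset, g κ ω ∂P ≤ q * (P Sset).toReal := by
        calc ∫ ω in Sset, g κ ω ∂P ≤ ∫ _ in Sset, q ∂P :=
            setIntegral_mono_on integrable_condExp.integrableOn
              (integrableOn_const (measure_ne_top P Sset)) hSmeas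
              (fun ω hω => hω.2)
          _ = q * (P Sset).toReal := by
              simp [integral_const]; rw [measureReal_def]; ring
      calc (P (Ek (k+1))).toReal
          = (P (Sset ∩ (θs κ ⁻¹' A))).toReal := by rw [hEsucc]
        _ = ∫ ω in Sset, X κ ω ∂P := hXint'.symm
        _ = ∫ ω in Sset, g κ ω ∂P := hce
        _ ≤ q * (P Sset).toReal := hbound
        _ ≤ q * (P (Ek k)).toReal := by
            apply mul_le_mul_of_nonneg_left _ hq0
            exact ENNReal.toReal_mono (measure_ne_top P _)
              (measure_mono Set.inter_subset_left)
        _ ≤ q * q ^ k := mul_le_mul_of_nonneg_left (ih (le_of_lt hk)) hq0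
        _ = q ^ (k+1) := by ring
  have hsubbad : {ω | ∀ i, T (θs i ω) ≠ θ0} ⊆ Gᶜ ∪ Ek L := by
    intro ω hω
    by_cases h : ω ∈ G
    · right
      rw [hEkmem]
      intro i _
      constructor
      · by_contra hc
        have hmem : θs i ω ∈ Metric.closedBall θ0 r := by
          rw [hAdef] at hc
          simpa using hc
        exact hω i (hT _ hmem)
      · rw [hGdef] at h
        exact Set.mem_iInter.1 h i
    · exact Or.inl h
  calc (P {ω | ∀ i, T (θs i ω) ≠ θ0}).toReal
      ≤ ((P Gᶜ) + P (Ek L)).toReal := by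
        apply ENNReal.toReal_mono
        · exact ENNReal.add_ne_top.2 ⟨measure_ne_top _ _, measure_ne_top _ _⟩
        · exact le_trans (measure_mono hsubbad) (measure_union_le _ _)
    _ = (P Gᶜ).toReal + (P (Ek L)).toReal :=
        ENNReal.toReal_add (measure_ne_top _ _) (measure_ne_top _ _)
    _ ≤ ρ + q ^ L := add_le_add hGcompl (hind L le_rfl)
end
end

section
/- Let Θ be the closed unit ball of ℝ^d and suppose the landscape assumptions hold with constants S, μ, α, r > 0 and unique global minimizer θ_0* of F. Suppose F̂_n : Θ → ℝ is a δ-approximation of F with δ < min{μ, r, α/4}. Then there exist constants C, c > 0 (depending only on d, α, r, S and δ, and not on β) such that for every β ≥ c·r^{−2}, the Gibbs measure π_β satisfies π_β(Θ \ B_r(θ_0*)) ≤ C·β^d·exp(−β·α/2); equivalently, log π_β(Θ \ B_r(θ_0*)) ≤ −β·α/2 + d·log β + log C. -/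
open MeasureTheory
open scoped RealInnerProductSpace

noncomputable section

set_option maxHeartbeats 1000000 in
/-- Under the landscape assumptions (Hessian bounded by `S` on `Θ`, unique
global minimizer `θ0` with `B_r(θ0) ⊆ Θ`, `μ`-strong convexity on `B_r(θ0)`, gap `α`
outside `B_r(θ0)`), if `F̂` is a `δ`-approximation of `F` with `δ < min{μ, r, α/4}`, then
there are constants `C, c > 0` (depending only on `d, α, r, S, δ` — in particular not on
`β`) such that for every `β ≥ c·r⁻²` the Gibbs measure `π_β` of `F̂` on `Θ` satisfies
`π_β(Θ \ B_r(θ0)) ≤ C·β^d·exp(−βα/2)`. -/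
theorem stmt_4 (d : ℕ) (hd : 0 < d) (S μ α r δ : ℝ)
    (hS : 0 < S) (hμ : 0 < μ) (hα : 0 < α) (hr : 0 < r)
    (hδ : δ < min μ (min r (α / 4))) :
    ∃ C > 0, ∃ c > 0, ∀ β : ℝ, c / r ^ 2 ≤ β →
      ∀ (F Fhat : EuclideanSpace ℝ (Fin d) → ℝ) (θ0 : EuclideanSpace ℝ (Fin d)),
        ContDiff ℝ 2 F →
        (∀ θ ∈ unitDomain d, ‖hess F θ‖ ≤ S) →
        θ0 ∈ unitDomain d →
        (∀ θ ∈ unitDomain d, θ ≠ θ0 → F θ0 < F θ) →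
        Metric.closedBall θ0 r ⊆ unitDomain d →
        (∀ θ ∈ Metric.closedBall θ0 r, ∀ v, μ * ‖v‖ ^ 2 ≤ ⟪v, hess F θ v⟫) →
        (∀ θ ∈ unitDomain d, θ ∉ Metric.closedBall θ0 r → F θ0 + α ≤ F θ) →
        IsDeltaApprox F Fhat δ →
        (∫ θ in unitDomain d \ Metric.closedBall θ0 r, Real.exp (-(β * Fhat θ))) /
            (∫ θ in unitDomain d, Real.exp (-(β * Fhat θ))) ≤
          C * β ^ d * Real.exp (-(β * α / 2)) := by
  haveI : Nonempty (Fin d) := ⟨⟨0, hd⟩⟩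
  obtain ⟨hδμ, hδr, hδα⟩ : δ < μ ∧ δ < r ∧ δ < α / 4 := by
    rw [lt_min_iff, lt_min_iff] at hδ; exact ⟨hδ.1, hδ.2.1, hδ.2.2⟩
  set ρ : ℝ := min r ((α / 2 - 2 * δ) / (S * r)) with hρdef
  have hq : (0:ℝ) < α / 2 - 2 * δ := by linarith
  have hρpos : 0 < ρ := lt_min hr (div_pos hq (by positivity))
  have hρr : ρ ≤ r := min_le_left _ _
  have hSrρ : S * r * ρ ≤ α / 2 - 2 * δ := by
    have h1 : ρ ≤ (α / 2 - 2 * δ) / (S * r) := min_le_right _ _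
    calc S * r * ρ ≤ S * r * ((α / 2 - 2 * δ) / (S * r)) :=
          mul_le_mul_of_nonneg_left h1 (by positivity)
      _ = α / 2 - 2 * δ := by field_simp
  set VΘ : ℝ := (volume (unitDomain d)).toReal with hVΘdef
  set Vρ : ℝ := (volume (Metric.closedBall (0 : EuclideanSpace ℝ (Fin d)) ρ)).toReal with hVρdef
  have hVΘpos : 0 < VΘ := by
    rw [hVΘdef]
    exact ENNReal.toReal_pos (Metric.measure_closedBall_pos _ _ one_pos).ne'
      measure_closedBall_lt_top.ne
  have hVρpos : 0 < Vρ := by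
    rw [hVρdef]
    exact ENNReal.toReal_pos (Metric.measure_closedBall_pos _ _ hρpos).ne'
      measure_closedBall_lt_top.ne
  clear_value ρ VΘ Vρ
  refine ⟨VΘ / Vρ, div_pos hVΘpos hVρpos, r ^ 2, by positivity, ?_⟩
  intro β hβ F Fhat θ0 hF hHess hθ0 hmin hball hconv hgap happrox
  have hβ1 : (1:ℝ) ≤ β := by
    rwa [div_self (by positivity : (r:ℝ) ^ 2 ≠ 0)] at hβ
  have hβ0 : (0:ℝ) < β := lt_of_lt_of_le one_pos hβ1
  have hβd : (1:ℝ) ≤ β ^ d := one_le_pow₀ hβ1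
  obtain ⟨happ0, -⟩ := happrox
  -- gradient of F vanishes at θ0
  have hFd : Differentiable ℝ F := hF.differentiable (by norm_num)
  have hlocmin : IsLocalMin F θ0 := by
    filter_upwards [Metric.closedBall_mem_nhds θ0 hr] with θ hθ
    rcases eq_or_ne θ θ0 with h | h
    · simp [h]
    · exact (hmin θ (hball hθ) h).le
  have hgrad0 : gradient F θ0 = 0 := by
    unfold gradient
    rw [hlocmin.fderiv_eq_zero, map_zero]
  -- gradient of F is differentiable
  have hgd : Differentiable ℝ (gradient F) := by
    have h1 : ContDiff ℝ 1 (fderiv ℝ F) := hF.fderiv_right (by norm_num)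
    have h2 : ContDiff ℝ 1 (gradient F) :=
      (InnerProductSpace.toDual ℝ (EuclideanSpace ℝ (Fin d))).symm.contDiff.comp h1
    exact h2.differentiable one_ne_zero
  -- gradient bound on the ball of radius r
  have hgradbound : ∀ θ ∈ Metric.closedBall θ0 r, ‖gradient F θ‖ ≤ S * ‖θ - θ0‖ := by
    intro θ hθ
    have h := (convex_closedBall θ0 r).norm_image_sub_le_of_norm_fderiv_le
      (f := gradient F) (fun x _ => hgd x)
      (fun x hx => by simpa [hess] using hHess x (hball hx))
      (Metric.mem_closedBall_self hr.le) hθ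
    simpa [hgrad0] using h
  -- value bound on the small ball
  have hsubρ : Metric.closedBall θ0 ρ ⊆ Metric.closedBall θ0 r :=
    Metric.closedBall_subset_closedBall hρr
  have hFbound : ∀ θ ∈ Metric.closedBall θ0 ρ, F θ ≤ F θ0 + S * r * ρ := by
    intro θ hθ
    have h1 : ‖F θ - F θ0‖ ≤ S * r * ‖θ - θ0‖ := by
      apply (convex_closedBall θ0 ρ).norm_image_sub_le_of_norm_fderiv_le
        (fun x _ => hFd x) ?_ (Metric.mem_closedBall_self hρpos.le) hθ
      intro x hx
      have h2 : ‖fderiv ℝ F x‖ = ‖gradient F x‖ :=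
        ((InnerProductSpace.toDual ℝ (EuclideanSpace ℝ (Fin d))).symm.norm_map _).symm
      rw [h2]
      have h3 : ‖x - θ0‖ ≤ r := mem_closedBall_iff_norm.mp (hsubρ hx)
      calc ‖gradient F x‖ ≤ S * ‖x - θ0‖ := hgradbound x (hsubρ hx)
        _ ≤ S * r := mul_le_mul_of_nonneg_left h3 hS.le
    have h3 : ‖θ - θ0‖ ≤ ρ := mem_closedBall_iff_norm.mp hθ
    rw [Real.norm_eq_abs] at h1
    have h4 := (abs_le.mp h1).2
    nlinarith [mul_le_mul_of_nonneg_left h3 (by positivity : (0:ℝ) ≤ S * r)]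
  -- the integrals
  by_cases hint : IntegrableOn (fun θ => Real.exp (-(β * Fhat θ))) (unitDomain d) volume
  case neg =>
    rw [integral_undef hint, div_zero]
    exact mul_nonneg (mul_nonneg (div_pos hVΘpos hVρpos).le (pow_nonneg hβ0.le d))
      (Real.exp_nonneg _)
  have hmeasΘ : MeasurableSet (unitDomain d) := measurableSet_closedBall
  have hμΘ : volume (unitDomain d) < ⊤ := measure_closedBall_lt_top
  set A := unitDomain d \ Metric.closedBall θ0 r with hAdef
  have hAm : MeasurableSet A := hmeasΘ.diff measurableSet_closedBall
  have hintA : IntegrableOn (fun θ => Real.exp (-(β * Fhat θ))) A volume :=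
    hint.mono_set Set.diff_subset
  have hμA : volume A ≤ volume (unitDomain d) := measure_mono Set.diff_subset
  -- numerator bound
  have hN : (∫ θ in A, Real.exp (-(β * Fhat θ))) ≤
      VΘ * Real.exp (-(β * (F θ0 + α - δ))) := by
    calc (∫ θ in A, Real.exp (-(β * Fhat θ)))
        ≤ ∫ _θ in A, Real.exp (-(β * (F θ0 + α - δ))) := by
          apply setIntegral_mono_on hintA
            ((integrableOn_const_iff).mpr (Or.inr (lt_of_le_of_lt hμA hμΘ))) hAm
          intro θ hθ
          apply Real.exp_le_exp.mpr
          have h1 : F θ0 + α ≤ F θ := hgap θ hθ.1 hθ.2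
          have h2 : F θ - Fhat θ ≤ δ := (abs_le.mp (happ0 θ hθ.1)).2
          have h3 : F θ0 + α - δ ≤ Fhat θ := by linarith
          have := mul_le_mul_of_nonneg_left h3 hβ0.le
          linarith
      _ = (volume A).toReal * Real.exp (-(β * (F θ0 + α - δ))) := by
          rw [setIntegral_const, smul_eq_mul, measureReal_def]
      _ ≤ VΘ * Real.exp (-(β * (F θ0 + α - δ))) := by
          apply mul_le_mul_of_nonneg_right _ (Real.exp_nonneg _)
          rw [hVΘdef]
          exact ENNReal.toReal_mono hμΘ.ne hμA
  -- denominator bound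
  set Bρ := Metric.closedBall θ0 ρ with hBdef
  have hBsub : Bρ ⊆ unitDomain d := hsubρ.trans hball
  have hintB : IntegrableOn (fun θ => Real.exp (-(β * Fhat θ))) Bρ volume :=
    hint.mono_set hBsub
  have hVρ' : (volume Bρ).toReal = Vρ := by
    rw [hBdef, hVρdef, Measure.addHaar_closedBall_center]
  have hD1 : Vρ * Real.exp (-(β * (F θ0 + S * r * ρ + δ))) ≤
      ∫ θ in Bρ, Real.exp (-(β * Fhat θ)) := by
    calc Vρ * Real.exp (-(β * (F θ0 + S * r * ρ + δ)))
        = ∫ _θ in Bρ, Real.exp (-(β * (F θ0 + S * r * ρ + δ))) := by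
          rw [setIntegral_const, smul_eq_mul, measureReal_def, hVρ']
      _ ≤ ∫ θ in Bρ, Real.exp (-(β * Fhat θ)) := by
          apply setIntegral_mono_on
            ((integrableOn_const_iff).mpr (Or.inr (lt_of_le_of_lt (measure_mono hBsub) hμΘ)))
            hintB measurableSet_closedBall
          intro θ hθ
          apply Real.exp_le_exp.mpr
          have h1 : F θ ≤ F θ0 + S * r * ρ := hFbound θ hθ
          have h2 : Fhat θ - F θ ≤ δ := by
            have := (abs_le.mp (happ0 θ (hBsub hθ))).1
            linarith
          have h3 : Fhat θ ≤ F θ0 + S * r * ρ + δ := by linarith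
          have := mul_le_mul_of_nonneg_left h3 hβ0.le
          linarith
  have hD2 : (∫ θ in Bρ, Real.exp (-(β * Fhat θ))) ≤
      ∫ θ in unitDomain d, Real.exp (-(β * Fhat θ)) :=
    setIntegral_mono_set hint (Filter.Eventually.of_forall fun θ => (Real.exp_pos _).le)
      (HasSubset.Subset.eventuallyLE hBsub)
  have hDenpos : 0 < Vρ * Real.exp (-(β * (F θ0 + S * r * ρ + δ))) :=
    mul_pos hVρpos (Real.exp_pos _)
  have key : (∫ θ in A, Real.exp (-(β * Fhat θ))) /
      (∫ θ in unitDomain d, Real.exp (-(β * Fhat θ))) ≤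
      (VΘ * Real.exp (-(β * (F θ0 + α - δ)))) /
      (Vρ * Real.exp (-(β * (F θ0 + S * r * ρ + δ)))) :=
    div_le_div₀ (mul_nonneg hVΘpos.le (Real.exp_nonneg _)) hN hDenpos (hD1.trans hD2)
  have hsplit : (VΘ * Real.exp (-(β * (F θ0 + α - δ)))) /
      (Vρ * Real.exp (-(β * (F θ0 + S * r * ρ + δ)))) =
      (VΘ / Vρ) * (Real.exp (-(β * (F θ0 + α - δ))) /
        Real.exp (-(β * (F θ0 + S * r * ρ + δ)))) := by
    field_simp
  have hexp : Real.exp (-(β * (F θ0 + α - δ))) /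
      Real.exp (-(β * (F θ0 + S * r * ρ + δ))) =
      Real.exp (-(β * (α - 2 * δ - S * r * ρ))) := by
    rw [← Real.exp_sub]
    congr 1
    ring
  have hexple : Real.exp (-(β * (α - 2 * δ - S * r * ρ))) ≤ Real.exp (-(β * α / 2)) := by
    apply Real.exp_le_exp.mpr
    have h := mul_le_mul_of_nonneg_left (show α / 2 ≤ α - 2 * δ - S * r * ρ by linarith) hβ0.le
    have h2 : β * α / 2 = β * (α / 2) := by ring
    rw [h2]
    exact neg_le_neg h
  calc (∫ θ in A, Real.exp (-(β * Fhat θ))) /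
      (∫ θ in unitDomain d, Real.exp (-(β * Fhat θ)))
      ≤ (VΘ / Vρ) * (Real.exp (-(β * (F θ0 + α - δ))) /
        Real.exp (-(β * (F θ0 + S * r * ρ + δ)))) := by rw [← hsplit]; exact key
    _ = (VΘ / Vρ) * Real.exp (-(β * (α - 2 * δ - S * r * ρ))) := by rw [hexp]
    _ ≤ (VΘ / Vρ) * Real.exp (-(β * α / 2)) :=
        mul_le_mul_of_nonneg_left hexple (div_pos hVΘpos hVρpos).le
    _ ≤ (VΘ / Vρ) * β ^ d * Real.exp (-(β * α / 2)) := by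
        have hC : (0:ℝ) ≤ VΘ / Vρ := (div_pos hVΘpos hVρpos).le
        have h1 : VΘ / Vρ * Real.exp (-(β * α / 2)) * 1 ≤
            VΘ / Vρ * Real.exp (-(β * α / 2)) * β ^ d :=
          mul_le_mul_of_nonneg_left hβd (mul_nonneg hC (Real.exp_nonneg _))
        nlinarith [h1]
end
end

section
/- Let Θ be a measurable space, π a probability measure on Θ, B ⊆ Θ a measurable set, and δ_β ∈ [0,1). Let X_1, …, X_L be random variables with values in Θ such that for each i = 1, …, L, almost surely, the conditional distribution of X_i given (X_1, …, X_{i−1}) is a probability measure π̂ with total-variation distance ‖π̂ − π‖_TV ≤ δ_β. Then P(X_1 ∉ B, X_2 ∉ B, …, X_L ∉ B) ≤ (π(B^c) + δ_β)^L. -/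
open MeasureTheory ProbabilityTheory

/-- Let `π` be a probability measure on `Θ`, `B ⊆ Θ` measurable,
`δβ ∈ [0,1)`, and let `X_1, …, X_L` be random points such that, for each `i`, the
conditional distribution of `X_i` given `(X_1, …, X_{i−1})` is almost surely within
total-variation distance `δβ` of `π` (expressed here via conditional expectations of
indicators: for every measurable `A`, a.s.
`|P[X_i ∈ A | X_1, …, X_{i−1}] − π(A)| ≤ δβ`).  Then
`P(X_1 ∉ B, …, X_L ∉ B) ≤ (π(Bᶜ) + δβ)^L`. -/
theorem stmt_6 (Θ : Type) [mΘ : MeasurableSpace Θ] (π : Measure Θ)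
    [IsProbabilityMeasure π]
    (Ω : Type) [mΩ : MeasurableSpace Ω] (P : Measure Ω) [IsProbabilityMeasure P]
    (L : ℕ) (X : Fin L → Ω → Θ) (hXmeas : ∀ i, Measurable (X i))
    (δβ : ℝ) (hδβ0 : 0 ≤ δβ) (hδβ1 : δβ < 1)
    (B : Set Θ) (hB : MeasurableSet B)
    (hcond : ∀ (i : Fin L) (A : Set Θ), MeasurableSet A →
      ∀ᵐ ω ∂P,
        |(P[(fun ω' => Set.indicator A (fun _ => (1 : ℝ)) (X i ω')) |
            ⨆ j : Fin L, ⨆ _ : j < i, MeasurableSpace.comap (X j) mΘ]) ω -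
          (π A).toReal| ≤ δβ) :
    (P {ω | ∀ i, X i ω ∉ B}).toReal ≤ ((π Bᶜ).toReal + δβ) ^ L := by
  set c : ℝ := (π Bᶜ).toReal + δβ with hc_def
  have hc : 0 ≤ c := add_nonneg ENNReal.toReal_nonneg hδβ0
  set E : ℕ → Set Ω := fun n => {ω | ∀ j : Fin L, (j : ℕ) < n → X j ω ∉ B} with hE_def
  have key : ∀ n, n ≤ L → (P (E n)).toReal ≤ c ^ n := by
    intro n
    induction n with
    | zero =>
      intro _
      have h0 : E 0 = Set.univ := by
        ext ω; simp [hE_def]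
      simp [h0]
    | succ n ih =>
      intro hn1
      have hn' : n < L := hn1
      set i : Fin L := ⟨n, hn'⟩ with hi_def
      have hle : (⨆ j : Fin L, ⨆ _ : j < i, MeasurableSpace.comap (X j) mΘ) ≤ mΩ := by
        refine iSup_le fun j => iSup_le fun _ => ?_
        exact (hXmeas j).comap_le
      haveI : SigmaFinite (P.trim hle) := inferInstance
      have hEm : MeasurableSet[⨆ j : Fin L, ⨆ _ : j < i, MeasurableSpace.comap (X j) mΘ]
          (E n) := by
        have hEeq : E n = ⋂ j : Fin L, ⋂ _ : (j : ℕ) < n, X j ⁻¹' Bᶜ := by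
          ext ω; simp [hE_def]
        rw [hEeq]
        refine MeasurableSet.iInter fun j => MeasurableSet.iInter fun hj => ?_
        have hj' : j < i := hj
        have h1 : MeasurableSet[MeasurableSpace.comap (X j) mΘ] (X j ⁻¹' Bᶜ) :=
          ⟨Bᶜ, hB.compl, rfl⟩
        exact
          (le_iSup₂ (f := fun (j : Fin L) (_ : j < i) => MeasurableSpace.comap (X j) mΘ) j hj')
            _ h1
      set f : Ω → ℝ := fun ω => Set.indicator Bᶜ (fun _ => (1 : ℝ)) (X i ω) with hf_def
      have hfeq : f = Set.indicator (X i ⁻¹' Bᶜ) (fun _ => (1 : ℝ)) := by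
        ext ω; rfl
      have hfint : Integrable f P := by
        rw [hfeq]
        exact (integrable_const (1 : ℝ)).indicator ((hXmeas i) hB.compl)
      have hEsucc : E (n + 1) = E n ∩ X i ⁻¹' Bᶜ := by
        ext ω
        constructor
        · intro h
          exact ⟨fun j hj => h j (hj.trans (Nat.lt_succ_self n)), h i (Nat.lt_succ_self n)⟩
        · rintro ⟨h1, h2⟩ j hj
          rcases Nat.lt_succ_iff_lt_or_eq.mp hj with h | h
          · exact h1 j h
          · have hji : j = i := Fin.ext h
            rw [hji]; exact h2
      have step1 : (P (E (n + 1))).toReal = ∫ ω in E n, f ω ∂P := by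
        rw [hfeq, setIntegral_indicator ((hXmeas i) hB.compl), setIntegral_const,
          hEsucc, Set.inter_comm]
        simp
        rfl
      have step2 : ∫ ω in E n, f ω ∂P
          = ∫ ω in E n, (P[f | ⨆ j : Fin L, ⨆ _ : j < i, MeasurableSpace.comap (X j) mΘ]) ω ∂P :=
        (setIntegral_condExp hle hfint hEm).symm
      have hbound : ∀ᵐ ω ∂P,
          (P[f | ⨆ j : Fin L, ⨆ _ : j < i, MeasurableSpace.comap (X j) mΘ]) ω ≤ c := by
        filter_upwards [hcond i Bᶜ hB.compl] with ω hω
        have h2 := (abs_le.mp hω).2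
        rw [hc_def]
        have : f = fun ω' => Set.indicator Bᶜ (fun _ => (1 : ℝ)) (X i ω') := rfl
        rw [this]
        linarith
      have step3 : ∫ ω in E n, (P[f | ⨆ j : Fin L, ⨆ _ : j < i, MeasurableSpace.comap (X j) mΘ]) ω ∂P
          ≤ ∫ _ω in E n, c ∂P := by
        refine setIntegral_mono_ae integrable_condExp.integrableOn
          ((integrableOn_const_iff (C := c)).mpr (Or.inr (measure_lt_top P _))) hbound
      have step4 : ∫ _ω in E n, c ∂P = (P (E n)).toReal * c := by
        rw [setIntegral_const]; simp [smul_eq_mul]; exact Or.inl rfl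
      calc (P (E (n + 1))).toReal
          = ∫ ω in E n, f ω ∂P := step1
        _ = ∫ ω in E n, (P[f | ⨆ j : Fin L, ⨆ _ : j < i, MeasurableSpace.comap (X j) mΘ]) ω ∂P :=
            step2
        _ ≤ ∫ _ω in E n, c ∂P := step3
        _ = (P (E n)).toReal * c := step4
        _ ≤ c ^ n * c := mul_le_mul_of_nonneg_right (ih (Nat.le_of_succ_le hn1)) hc
        _ = c ^ (n + 1) := (pow_succ c n).symm
  have hfinal : {ω | ∀ i, X i ω ∉ B} = E L := by
    ext ω
    simp only [hE_def, Set.mem_setOf_eq]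
    exact ⟨fun h j _ => h j, fun h j => h j j.isLt⟩
  rw [hfinal]
  exact key L le_rfl
end

section
/- Let Θ ⊆ ℝ^d be a bounded measurable set, F̂ : Θ → ℝ bounded and measurable, β > 0, and π_β the probability measure on Θ with density proportional to exp(−β F̂(θ)). Let θ_0 ∈ Θ, r > 0 and B ⊆ Θ measurable with B_r(θ_0) ⊆ B, and let M > 0 and a ∈ ℝ. Suppose F̂(θ) − F̂(θ_0) ≤ M‖θ − θ_0‖² for all θ ∈ B_r(θ_0) and F̂(θ) − F̂(θ_0) ≥ a for all θ ∈ Θ \ B. Then π_β(Θ \ B) ≤ exp(−β a) · Leb(Θ \ B) / ( ∫_{−r/√d}^{r/√d} exp(−β M t²) dt )^d. -/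
open MeasureTheory

/-- For a bounded measurable set `Θ`, a bounded measurable `F̂`, `β > 0`,
`θ0 ∈ Θ`, `r > 0`, a measurable `B` with `B_r(θ0) ⊆ B ⊆ Θ`, `M > 0` and `a ∈ ℝ` with
`F̂(θ) − F̂(θ0) ≤ M‖θ − θ0‖²` on `B_r(θ0)` and `F̂(θ) − F̂(θ0) ≥ a` on `Θ \ B`, the Gibbs
probability of `Θ \ B` is at most
`exp(−βa)·Leb(Θ \ B) / ( ∫_{−r/√d}^{r/√d} exp(−βMt²) dt )^d`. -/
theorem stmt_16 (d : ℕ) (Θ : Set (EuclideanSpace ℝ (Fin d)))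
    (hΘm : MeasurableSet Θ) (hΘb : Bornology.IsBounded Θ)
    (Fhat : EuclideanSpace ℝ (Fin d) → ℝ) (hFm : Measurable Fhat)
    (hFb : ∃ M0, ∀ θ ∈ Θ, |Fhat θ| ≤ M0)
    (β : ℝ) (hβ : 0 < β)
    (θ0 : EuclideanSpace ℝ (Fin d)) (hθ0 : θ0 ∈ Θ)
    (r : ℝ) (hr : 0 < r)
    (B : Set (EuclideanSpace ℝ (Fin d))) (hBm : MeasurableSet B)
    (hrB : Metric.closedBall θ0 r ⊆ B) (hBΘ : B ⊆ Θ)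
    (M : ℝ) (hM : 0 < M) (a : ℝ)
    (hup : ∀ θ ∈ Metric.closedBall θ0 r, Fhat θ - Fhat θ0 ≤ M * ‖θ - θ0‖ ^ 2)
    (hlow : ∀ θ ∈ Θ \ B, a ≤ Fhat θ - Fhat θ0) :
    (∫ θ in Θ \ B, Real.exp (-(β * Fhat θ))) / (∫ θ in Θ, Real.exp (-(β * Fhat θ))) ≤
      Real.exp (-(β * a)) * (volume (Θ \ B)).toReal /
        (∫ t in (-(r / Real.sqrt d))..(r / Real.sqrt d), Real.exp (-(β * M * t ^ 2))) ^ d := by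
  obtain ⟨M0, hM0⟩ := hFb
  set c : ℝ := r / Real.sqrt d with hc
  set C : ℝ := ∫ t in (-c)..c, Real.exp (-(β * M * t ^ 2)) with hCdef
  set F0 : ℝ := Fhat θ0 with hF0
  -- the cube
  set S : Set (EuclideanSpace ℝ (Fin d)) :=
    {x | ∀ i, x i ∈ Set.Icc (θ0 i - c) (θ0 i + c)} with hSdef
  have hc0 : 0 ≤ c := div_nonneg hr.le (Real.sqrt_nonneg _)
  have hnormsq : ∀ x : EuclideanSpace ℝ (Fin d), ‖x - θ0‖ ^ 2 = ∑ i, (x i - θ0 i) ^ 2 := by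
    intro x
    rw [EuclideanSpace.norm_eq, Real.sq_sqrt (by positivity)]
    refine Finset.sum_congr rfl fun i _ => ?_
    have : (x - θ0) i = x i - θ0 i := rfl
    rw [this, Real.norm_eq_abs, sq_abs]
  have hSball : S ⊆ Metric.closedBall θ0 r := by
    intro x hx
    rw [Metric.mem_closedBall, dist_eq_norm]
    have hnorm : ‖x - θ0‖ ^ 2 ≤ r ^ 2 := by
      rw [hnormsq x]
      have h1 : ∑ i, (x i - θ0 i) ^ 2 ≤ ∑ _i : Fin d, c ^ 2 := by
        refine Finset.sum_le_sum fun i _ => ?_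
        have h := hx i
        have h2 : |x i - θ0 i| ≤ c := by
          rw [abs_le]; exact ⟨by linarith [h.1], by linarith [h.2]⟩
        calc (x i - θ0 i) ^ 2 = |x i - θ0 i| ^ 2 := (sq_abs _).symm
          _ ≤ c ^ 2 := pow_le_pow_left₀ (abs_nonneg _) h2 2
      refine h1.trans ?_
      rw [Finset.sum_const, Finset.card_univ, Fintype.card_fin, nsmul_eq_mul]
      rcases Nat.eq_zero_or_pos d with hd | hd
      · subst hd; simp; positivity
      · have hd0 : (0:ℝ) < d := by exact_mod_cast hd
        have : c ^ 2 = r ^ 2 / d := by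
          rw [hc, div_pow, Real.sq_sqrt hd0.le]
        rw [this, mul_div_cancel₀ _ (ne_of_gt hd0)]
    nlinarith [norm_nonneg (x - θ0)]
  have hSΘ : S ⊆ Θ := fun x hx => hBΘ (hrB (hSball hx))
  have hSm : MeasurableSet S := by
    have hEq : S = ⋂ i, (fun x : EuclideanSpace ℝ (Fin d) => x i) ⁻¹'
        Set.Icc (θ0 i - c) (θ0 i + c) := by
      ext x; simp [hSdef, Set.mem_iInter]
    rw [hEq]
    exact MeasurableSet.iInter fun i =>
      ((measurable_pi_apply i).comp (WithLp.measurable_ofLp _ _) : Measurable fun x : EuclideanSpace ℝ (Fin d) => x i) measurableSet_Icc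
  have hΘfin : volume Θ < ⊤ := hΘb.measure_lt_top
  -- integrability of the Gibbs integrand on Θ
  have hgm : Measurable fun θ => Real.exp (-(β * Fhat θ)) :=
    (Real.measurable_exp.comp ((measurable_const.mul hFm).neg))
  have hbound : ∀ θ ∈ Θ, ‖Real.exp (-(β * Fhat θ))‖ ≤ Real.exp (β * M0) := by
    intro θ hθ
    rw [Real.norm_eq_abs, abs_of_pos (Real.exp_pos _), Real.exp_le_exp]
    have := hM0 θ hθ
    have h1 : -M0 ≤ Fhat θ := by cases abs_le.1 this; linarith
    nlinarith
  have hIntΘ : IntegrableOn (fun θ => Real.exp (-(β * Fhat θ))) Θ := by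
    refine Measure.integrableOn_of_bounded (M := Real.exp (β * M0)) hΘfin.ne hgm.aestronglyMeasurable ?_
    exact (ae_restrict_iff' hΘm).2 (Filter.Eventually.of_forall hbound)
  -- numerator bound
  have hdiffm : MeasurableSet (Θ \ B) := hΘm.diff hBm
  have hdifffin : volume (Θ \ B) < ⊤ :=
    lt_of_le_of_lt (measure_mono Set.diff_subset) hΘfin
  have hnum : (∫ θ in Θ \ B, Real.exp (-(β * Fhat θ)))
      ≤ Real.exp (-(β * (a + F0))) * (volume (Θ \ B)).toReal := by
    have h1 : (∫ θ in Θ \ B, Real.exp (-(β * Fhat θ)))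
        ≤ ∫ _θ in Θ \ B, Real.exp (-(β * (a + F0))) := by
      refine setIntegral_mono_on (hIntΘ.mono_set Set.diff_subset)
        (integrableOn_const hdifffin.ne) hdiffm ?_
      intro θ hθ
      rw [Real.exp_le_exp]
      have := hlow θ hθ
      nlinarith
    rw [setIntegral_const, smul_eq_mul, mul_comm] at h1
    exact h1
  -- cube integral equals C ^ d
  have hcube : (∫ x in S, Real.exp (-(β * M * ‖x - θ0‖ ^ 2)))
      = C ^ d := by
    set f : Fin d → ℝ → ℝ := fun i t =>
      Set.indicator (Set.Icc (θ0 i - c) (θ0 i + c))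
        (fun t => Real.exp (-(β * M * (t - θ0 i) ^ 2))) t with hfdef
    have key : ∀ x : EuclideanSpace ℝ (Fin d),
        S.indicator (fun x => Real.exp (-(β * M * ‖x - θ0‖ ^ 2))) x = ∏ i, f i (x i) := by
      intro x
      by_cases hx : x ∈ S
      · rw [Set.indicator_of_mem hx]
        have : ∀ i : Fin d, f i (x i) = Real.exp (-(β * M * (x i - θ0 i) ^ 2)) := by
          intro i; rw [hfdef]; exact Set.indicator_of_mem (hx i) _
        rw [Finset.prod_congr rfl fun i _ => this i, ← Real.exp_sum]
        congr 1
        rw [hnormsq x, Finset.mul_sum, ← Finset.sum_neg_distrib]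
      · rw [Set.indicator_of_notMem hx]
        obtain ⟨i, hi⟩ : ∃ i, x i ∉ Set.Icc (θ0 i - c) (θ0 i + c) := by
          by_contra h; push_neg at h; exact hx h
        refine (Finset.prod_eq_zero (Finset.mem_univ i) ?_).symm
        rw [hfdef]; exact Set.indicator_of_notMem hi _
    rw [← integral_indicator hSm]
    calc (∫ x : EuclideanSpace ℝ (Fin d),
            S.indicator (fun x => Real.exp (-(β * M * ‖x - θ0‖ ^ 2))) x)
        = ∫ x : EuclideanSpace ℝ (Fin d), ∏ i, f i (x i) := by
          exact integral_congr_ae (Filter.Eventually.of_forall key)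
      _ = ∫ y : Fin d → ℝ, ∏ i, f i (y i) := by
          rw [← (EuclideanSpace.volume_preserving_symm_measurableEquiv_toLp (Fin d)).integral_comp
            (MeasurableEquiv.toLp 2 (Fin d → ℝ)).symm.measurableEmbedding
            (fun y => ∏ i, f i (y i))]
          rfl
      _ = ∏ i, ∫ t : ℝ, f i t := integral_fintype_prod_eq_prod f
      _ = C ^ d := by
          have : ∀ i : Fin d, (∫ t : ℝ, f i t) = C := by
            intro i
            rw [hfdef]
            rw [integral_indicator measurableSet_Icc, integral_Icc_eq_integral_Ioc,
              ← intervalIntegral.integral_of_le (by linarith)]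
            have := intervalIntegral.integral_comp_sub_right
              (a := θ0 i - c) (b := θ0 i + c)
              (fun t => Real.exp (-(β * M * t ^ 2))) (θ0 i)
            rw [this]
            have h1 : θ0 i - c - θ0 i = -c := by ring
            have h2 : θ0 i + c - θ0 i = c := by ring
            rw [h1, h2, hCdef]
          rw [Finset.prod_congr rfl fun i _ => this i, Finset.prod_const,
            Finset.card_univ, Fintype.card_fin]
  -- C positivity
  have hCpow_pos : 0 < C ^ d := by
    rcases Nat.eq_zero_or_pos d with hd | hd
    · subst hd; simp
    · have hd0 : (0:ℝ) < d := by exact_mod_cast hd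
      have hcpos : 0 < c := div_pos hr (Real.sqrt_pos.2 hd0)
      have : 0 < C := by
        refine intervalIntegral.intervalIntegral_pos_of_pos_on ?_ ?_ (by linarith)
        · exact (Real.continuous_exp.comp
            ((continuous_const.mul (continuous_pow 2)).neg)).intervalIntegrable _ _
        · intro t _; exact Real.exp_pos _
      positivity
  -- denominator lower bound
  have hden : Real.exp (-(β * F0)) * C ^ d ≤ ∫ θ in Θ, Real.exp (-(β * Fhat θ)) := by
    have hcont : Continuous fun x : EuclideanSpace ℝ (Fin d) =>
        Real.exp (-(β * (F0 + M * ‖x - θ0‖ ^ 2))) := by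
      have h1 : Continuous fun x : EuclideanSpace ℝ (Fin d) => ‖x - θ0‖ ^ 2 :=
        (continuous_id.sub continuous_const).norm.pow 2
      exact Real.continuous_exp.comp
        ((continuous_const.mul (continuous_const.add (continuous_const.mul h1))).neg)
    have hSfin : volume S < ⊤ := lt_of_le_of_lt (measure_mono hSΘ) hΘfin
    have hIntS : IntegrableOn
        (fun x => Real.exp (-(β * (F0 + M * ‖x - θ0‖ ^ 2)))) S := by
      refine Measure.integrableOn_of_bounded (M := Real.exp (β * M0)) hSfin.ne
        hcont.aestronglyMeasurable ?_
      refine (ae_restrict_iff' hSm).2 (Filter.Eventually.of_forall ?_)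
      intro x _
      rw [Real.norm_eq_abs, abs_of_pos (Real.exp_pos _), Real.exp_le_exp]
      have h1 : -M0 ≤ F0 := by cases abs_le.1 (hM0 θ0 hθ0); linarith
      nlinarith [mul_le_mul_of_nonneg_left h1 hβ.le,
        mul_nonneg hβ.le (mul_nonneg hM.le (sq_nonneg ‖x - θ0‖))]
    have step1 : (∫ x in S, Real.exp (-(β * (F0 + M * ‖x - θ0‖ ^ 2))))
        ≤ ∫ x in S, Real.exp (-(β * Fhat x)) := by
      refine setIntegral_mono_on hIntS (hIntΘ.mono_set hSΘ) hSm ?_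
      intro x hx
      rw [Real.exp_le_exp]
      have := hup x (hSball hx)
      nlinarith
    have step2 : (∫ x in S, Real.exp (-(β * Fhat x)))
        ≤ ∫ θ in Θ, Real.exp (-(β * Fhat θ)) := by
      refine setIntegral_mono_set hIntΘ ?_ (HasSubset.Subset.eventuallyLE hSΘ)
      exact Filter.Eventually.of_forall fun x => (Real.exp_pos _).le
    have step0 : (∫ x in S, Real.exp (-(β * (F0 + M * ‖x - θ0‖ ^ 2))))
        = Real.exp (-(β * F0)) * C ^ d := by
      rw [← hcube, ← integral_const_mul]
      refine setIntegral_congr_fun hSm fun x _ => ?_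
      rw [← Real.exp_add]
      congr 1; ring
    linarith
  -- conclude
  have hLpos : 0 < Real.exp (-(β * F0)) * C ^ d := by positivity
  have hNnn : 0 ≤ ∫ θ in Θ \ B, Real.exp (-(β * Fhat θ)) :=
    setIntegral_nonneg hdiffm fun x _ => (Real.exp_pos _).le
  calc (∫ θ in Θ \ B, Real.exp (-(β * Fhat θ))) / (∫ θ in Θ, Real.exp (-(β * Fhat θ)))
      ≤ (∫ θ in Θ \ B, Real.exp (-(β * Fhat θ))) / (Real.exp (-(β * F0)) * C ^ d) :=
        div_le_div_of_nonneg_left hNnn hLpos hden |>.trans_eq rfl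
    _ ≤ (Real.exp (-(β * (a + F0))) * (volume (Θ \ B)).toReal)
          / (Real.exp (-(β * F0)) * C ^ d) := by
        exact div_le_div_of_nonneg_right hnum hLpos.le |>.trans_eq rfl
    _ = Real.exp (-(β * a)) * (volume (Θ \ B)).toReal / C ^ d := by
        rw [show (-(β * (a + F0))) = -(β * a) + -(β * F0) by ring, Real.exp_add]
        field_simp
end
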